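/- Let a = [[1,1],[0,1]] ∈ GL₂(ℝ). For any g ∈ GL₂(ℝ), if the sequence a^k g a^{−k} converges to the identity matrix as k → +∞, then g is the identity matrix. -/

import Mathlib

open Matrix Filter

lemma shear_pow (k : ℕ) :
    (!![1, 1; 0, 1] : Matrix (Fin 2) (Fin 2) ℝ) ^ k = !![1, (k : ℝ); 0, 1] := by
  induction k with
  | zero => simp [Matrix.one_fin_two]
  | succ n ih =>
      rw [pow_succ, ih]
      push_cast
      simp [Matrix.mul_fin_two]
      ring

lemma shear_inv :
    (!![1, 1; 0, 1] : Matrix (Fin 2) (Fin 2) ℝ)⁻¹ = !![1, -1; 0, 1] := by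
  apply Matrix.inv_eq_right_inv
  simp [Matrix.mul_fin_two, Matrix.one_fin_two]

lemma shear_inv_pow (k : ℕ) :
    ((!![1, 1; 0, 1] : Matrix (Fin 2) (Fin 2) ℝ)⁻¹) ^ k = !![1, -(k : ℝ); 0, 1] := by
  rw [shear_inv]
  induction k with
  | zero => simp [Matrix.one_fin_two]
  | succ n ih =>
      rw [pow_succ, ih]
      push_cast
      simp [Matrix.mul_fin_two]

theorem shear_conjugation_contracts_only_identity
    (g : Matrix (Fin 2) (Fin 2) ℝ) (hg : IsUnit g)
    (a : Matrix (Fin 2) (Fin 2) ℝ) (ha : a = !![1, 1; 0, 1])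
    (hconv : Tendsto (fun k : ℕ => a ^ k * g * (a⁻¹) ^ k) atTop (nhds 1)) :
    g = 1 := by
  subst ha
  set p := g 0 0 with hp
  set q := g 0 1 with hq
  set r := g 1 0 with hr
  set s := g 1 1 with hs
  have hentry : ∀ i j : Fin 2,
      Tendsto (fun k : ℕ => ((!![1, 1; 0, 1] ^ k * g * ((!![1, 1; 0, 1] : Matrix (Fin 2) (Fin 2) ℝ)⁻¹) ^ k : Matrix (Fin 2) (Fin 2) ℝ)) i j) atTop
        (nhds ((1 : Matrix (Fin 2) (Fin 2) ℝ) i j)) := by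
    intro i j
    exact ((continuous_apply j).comp (continuous_apply i)).continuousAt.tendsto.comp hconv
  have hform : ∀ (k : ℕ),
      (!![1, 1; 0, 1] ^ k * g * ((!![1, 1; 0, 1] : Matrix (Fin 2) (Fin 2) ℝ)⁻¹) ^ k) =
        !![p + k * r, q + (k:ℝ) * s - (k:ℝ) * (p + k * r); r, s - k * r] := by
    intro k
    rw [shear_pow, shear_inv_pow]
    have hg2 : g = !![p, q; r, s] := by
      rw [hp, hq, hr, hs]; exact (Matrix.etaExpand_eq g).symm
    rw [hg2]
    simp [Matrix.mul_fin_two]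
    ring_nf
    exact ⟨trivial, trivial⟩
  have h10 : Tendsto (fun _ : ℕ => r) atTop (nhds ((1 : Matrix (Fin 2) (Fin 2) ℝ) 1 0)) := by
    have := hentry 1 0
    simp only [hform] at this
    simpa using this
  have hr0 : r = 0 := by
    have := tendsto_nhds_unique h10 tendsto_const_nhds
    simpa [Matrix.one_apply] using this.symm
  have h00 : Tendsto (fun k : ℕ => p + (k:ℝ) * r) atTop (nhds ((1 : Matrix (Fin 2) (Fin 2) ℝ) 0 0)) := by
    have := hentry 0 0
    simp only [hform] at this
    simpa using this
  have hp1 : p = 1 := by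
    have h := h00
    rw [hr0] at h
    simpa using h
  have h11 : Tendsto (fun k : ℕ => s - (k:ℝ) * r) atTop (nhds ((1 : Matrix (Fin 2) (Fin 2) ℝ) 1 1)) := by
    have := hentry 1 1
    simp only [hform] at this
    simpa using this
  have hs1 : s = 1 := by
    have h := h11
    rw [hr0] at h
    simpa using h
  have h01 : Tendsto (fun k : ℕ => q + (k:ℝ) * s - (k:ℝ) * (p + k * r)) atTop
      (nhds ((1 : Matrix (Fin 2) (Fin 2) ℝ) 0 1)) := by
    have := hentry 0 1
    simp only [hform] at this
    simpa using this
  have hq0 : q = 0 := by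
    have h := h01
    rw [hr0, hp1, hs1] at h
    simpa using h
  have hg2 : g = !![p, q; r, s] := by
    rw [hp, hq, hr, hs]; exact (Matrix.etaExpand_eq g).symm
  rw [hg2, hr0, hp1, hs1, hq0, Matrix.one_fin_two]
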